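/- arXiv:2402.15442 — 2 statements merged into one kernel-verified Lean document; each statement's English description precedes it below -/
import Mathlib

section
/- Let (M, d) be a pseudometric space, K a positive integer, μ ∈ M, and μ₁,…,μ_K i.i.d. M-valued random elements with E[d(μ₁, μ)²] < ∞. Let δ ∈ (0,1), K = ⌈8 log(1/δ)⌉, and let j* ∈ {1,…,K} minimize j ↦ min_{I: |I|>K/2} max_{i∈I} d(μ_i, μ_j). Then P(d(μ_{j*}, μ) > 6·√(E[d(μ₁,μ)²])) ≤ δ. -/
open Finset MeasureTheory ProbabilityTheory

/-- The GROS objective: `ν ↦ min_{I ⊆ [K], |I| > K/2} max_{j ∈ I} d(μ_j, ν)`. -/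
noncomputable def grosObj {M : Type*} [PseudoMetricSpace M] (K : ℕ)
    (μs : Fin K → M) (ν : M) : ℝ :=
  ⨅ I : {I : Finset (Fin K) // K < 2 * I.card}, ⨆ j ∈ I.1, dist (μs j) ν

lemma gros_bddBelow {M : Type*} [PseudoMetricSpace M] (K : ℕ) (μs : Fin K → M) (ν : M) :
    BddBelow (Set.range fun I : {I : Finset (Fin K) // K < 2 * I.card} =>
      ⨆ j ∈ I.1, dist (μs j) ν) := by
  refine ⟨0, ?_⟩
  rintro _ ⟨I, rfl⟩
  exact Real.iSup_nonneg fun j => Real.iSup_nonneg fun _ => dist_nonneg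

lemma det_lemma {M : Type*} [PseudoMetricSpace M] {K : ℕ} (μs : Fin K → M) (μ0 : M)
    {t : ℝ} (ht : 0 ≤ t) (jstar : Fin K)
    (hmin : ∀ j : Fin K, grosObj K μs (μs jstar) ≤ grosObj K μs (μs j))
    (hG : K < 2 * (Finset.univ.filter (fun k => dist (μs k) μ0 ≤ t)).card) :
    dist (μs jstar) μ0 ≤ 3 * t := by
  set G := Finset.univ.filter (fun k => dist (μs k) μ0 ≤ t) with hGdef
  obtain ⟨j₀, hj₀⟩ : G.Nonempty := Finset.card_pos.mp (by omega)
  have hj₀t : dist (μs j₀) μ0 ≤ t := (Finset.mem_filter.mp hj₀).2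
  have hobj : grosObj K μs (μs j₀) ≤ 2 * t := by
    refine (ciInf_le (gros_bddBelow K μs (μs j₀)) ⟨G, hG⟩).trans ?_
    refine Real.iSup_le (fun j => Real.iSup_le (fun hj => ?_) (by linarith)) (by linarith)
    have h1 : dist (μs j) μ0 ≤ t := (Finset.mem_filter.mp hj).2
    calc dist (μs j) (μs j₀) ≤ dist (μs j) μ0 + dist μ0 (μs j₀) := dist_triangle _ _ _
    _ ≤ t + t := add_le_add h1 (by rw [dist_comm]; exact hj₀t)
    _ = 2 * t := by ring
  have h2 : grosObj K μs (μs jstar) ≤ 2 * t := (hmin j₀).trans hobj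
  refine le_of_forall_pos_le_add (fun ε hε => ?_)
  have hlt : grosObj K μs (μs jstar) < 2 * t + ε := by linarith
  have hKpos : 0 < K := by
    have := Finset.card_le_univ G
    simp only [Finset.card_univ, Fintype.card_fin] at this
    omega
  haveI : Nonempty {I : Finset (Fin K) // K < 2 * I.card} :=
    ⟨⟨Finset.univ, by simp only [Finset.card_univ, Fintype.card_fin]; omega⟩⟩
  obtain ⟨I, hI⟩ := exists_lt_of_ciInf_lt hlt
  have hcard : 0 < (I.1 ∩ G).card := by
    have h3 := Finset.card_union_add_card_inter I.1 G
    have h4 : (I.1 ∪ G).card ≤ K := by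
      simpa using Finset.card_le_univ (I.1 ∪ G)
    have h5 := I.2
    omega
  obtain ⟨i, hi⟩ := Finset.card_pos.mp hcard
  have hiI : i ∈ I.1 := (Finset.mem_inter.mp hi).1
  have hiG : dist (μs i) μ0 ≤ t := (Finset.mem_filter.mp (Finset.mem_inter.mp hi).2).2
  have hdi : dist (μs i) (μs jstar) < 2 * t + ε := by
    refine lt_of_le_of_lt ?_ hI
    have h6 : (⨆ (_ : i ∈ I.1), dist (μs i) (μs jstar)) = dist (μs i) (μs jstar) :=
      ciSup_pos (f := fun _ => dist (μs i) (μs jstar)) hiI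
    exact h6.symm.trans_le (le_ciSup (f := fun j => ⨆ _ : j ∈ I.1, dist (μs j) (μs jstar))
      (Set.Finite.bddAbove (Set.finite_range _)) i)
  calc dist (μs jstar) μ0 ≤ dist (μs jstar) (μs i) + dist (μs i) μ0 := dist_triangle _ _ _
  _ ≤ (2 * t + ε) + t := by rw [dist_comm]; linarith
  _ = 3 * t + ε := by ring

lemma log43 : (1:ℝ)/4 ≤ Real.log (4/3) := by
  rw [Real.le_log_iff_exp_le (by norm_num)]
  by_contra h
  push_neg at h
  have h1 : Real.exp 1 = Real.exp (1/4) ^ 4 := by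
    rw [← Real.exp_nat_mul]; norm_num
  have h2 := Real.exp_one_gt_d9
  have h4 : ((4:ℝ)/3) ^ 4 < Real.exp (1/4) ^ 4 :=
    pow_lt_pow_left₀ h (by norm_num) (by norm_num)
  rw [← h1] at h4
  have := Real.exp_one_lt_d9
  norm_num at h4
  linarith

lemma arith_bound (δ : ℝ) (hδ0 : 0 < δ) (hδ1 : δ < 1) (K : ℕ)
    (hK : 8 * Real.log (1/δ) ≤ (K:ℝ)) :
    Real.exp (-(Real.log 3) * ((K:ℝ)/2)) * ((3:ℝ)/2)^K ≤ δ := by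
  have h32 : ((3:ℝ)/2)^K = Real.exp ((K:ℝ) * Real.log (3/2)) := by
    rw [Real.exp_nat_mul, Real.exp_log (by norm_num)]
  rw [h32, ← Real.exp_add]
  rw [← Real.exp_log hδ0]
  apply Real.exp_le_exp.mpr
  have hlog1δ : Real.log (1/δ) = - Real.log δ := by
    rw [one_div, Real.log_inv]
  have h43 : Real.log (4/3) = 2 * Real.log 2 - Real.log 3 := by
    rw [Real.log_div (by norm_num) (by norm_num)]
    have : (4:ℝ) = 2^2 := by norm_num
    rw [this, Real.log_pow]; push_cast; ring
  have h32' : Real.log (3/2) = Real.log 3 - Real.log 2 :=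
    Real.log_div (by norm_num) (by norm_num)
  have hδneg : Real.log δ < 0 := Real.log_neg hδ0 hδ1
  rw [hlog1δ] at hK
  have hK0 : (0:ℝ) ≤ K := Nat.cast_nonneg K
  have h5 := log43
  rw [h43] at h5
  nlinarith [mul_le_mul_of_nonneg_left h5 hK0]

/-- Practical sub-Gaussian aggregation (Theorem 3.1): if the GROS minimization is
restricted to the sample `μ_1,…,μ_K` (choosing an index `j*`), then
`P(d(μ_{j*}, μ) > 6√(E[d(μ₁,μ)²])) ≤ δ` with `K = ⌈8 log(1/δ)⌉`. -/
theorem stmt9 {Ω M : Type*} [MeasureSpace Ω] [IsProbabilityMeasure (ℙ : Measure Ω)]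
    [PseudoMetricSpace M] [MeasurableSpace M] [BorelSpace M]
    (δ : ℝ) (hδ : δ ∈ Set.Ioo (0 : ℝ) 1)
    (K : ℕ) (hKδ : K = ⌈8 * Real.log (1 / δ)⌉₊) (hKpos : 0 < K)
    (μ0 : M) (μs : Fin K → Ω → M) (hmeas : ∀ k, Measurable (μs k))
    (hind : iIndepFun μs ℙ)
    (hident : ∀ k, IdentDistrib (μs k) (μs ⟨0, hKpos⟩) ℙ ℙ)
    (hint : Integrable (fun ω => dist (μs ⟨0, hKpos⟩ ω) μ0 ^ 2) ℙ)
    (jstar : Ω → Fin K)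
    (hmin : ∀ᵐ ω ∂ℙ, ∀ j : Fin K,
      grosObj K (fun k => μs k ω) (μs (jstar ω) ω) ≤
        grosObj K (fun k => μs k ω) (μs j ω)) :
    ℙ {ω | 6 * Real.sqrt (∫ ω', dist (μs ⟨0, hKpos⟩ ω') μ0 ^ 2 ∂ℙ) <
        dist (μs (jstar ω) ω) μ0} ≤ ENNReal.ofReal δ := by
  classical
  obtain ⟨hδ0, hδ1⟩ := hδ
  set k₀ : Fin K := ⟨0, hKpos⟩ with hk₀
  set E : ℝ := ∫ ω', dist (μs k₀ ω') μ0 ^ 2 ∂ℙ with hE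
  set σ : ℝ := Real.sqrt E with hσ
  have hσ0 : 0 ≤ σ := Real.sqrt_nonneg _
  have hE0 : 0 ≤ E := integral_nonneg fun ω => sq_nonneg _
  -- the bad set in M and in Ω
  set A : Set M := {x | 2 * σ < dist x μ0} with hA
  have hdistM : Measurable (fun x : M => dist x μ0) :=
    (continuous_id.dist continuous_const).measurable
  have hAmeas : MeasurableSet A := measurableSet_lt measurable_const hdistM
  set B : Fin K → Set Ω := fun k => μs k ⁻¹' A with hBdef
  have hBmeas : ∀ k, MeasurableSet (B k) := fun k => (hmeas k) hAmeas
  -- probability of each bad set is at most 1/4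
  have hp0 : (ℙ (B k₀)).toReal ≤ 1/4 := by
    rcases hE0.eq_or_lt with hE0' | hE0'
    · have hae : (fun ω => dist (μs k₀ ω) μ0 ^ 2) =ᵐ[ℙ] 0 :=
        (integral_eq_zero_iff_of_nonneg (fun ω => sq_nonneg _) hint).mp hE0'.symm
      have hz : ℙ (B k₀) = 0 := by
        rw [measure_eq_zero_iff_ae_notMem]
        filter_upwards [hae] with ω hω
        have hd : dist (μs k₀ ω) μ0 = 0 := by
          have := pow_eq_zero_iff (n := 2) (by norm_num) |>.mp hω
          exact this
        intro hmem
        have : 2 * σ < dist (μs k₀ ω) μ0 := hmem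
        rw [hd] at this
        nlinarith
      rw [hz]; norm_num
    · have hσE : σ ^ 2 = E := Real.sq_sqrt hE0
      have hsub : B k₀ ⊆ {ω | 4 * E ≤ dist (μs k₀ ω) μ0 ^ 2} := by
        intro ω hω
        have hω' : 2 * σ < dist (μs k₀ ω) μ0 := hω
        have h1 : (2*σ) * (2*σ) ≤ dist (μs k₀ ω) μ0 * dist (μs k₀ ω) μ0 :=
          mul_self_le_mul_self (by positivity) hω'.le
        simp only [Set.mem_setOf_eq]
        nlinarith
      have hmar := mul_meas_ge_le_integral_of_nonneg
        (Filter.Eventually.of_forall fun ω => sq_nonneg (dist (μs k₀ ω) μ0)) hint (4 * E)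
      have hmono : (ℙ (B k₀)).toReal ≤
          (ℙ {ω | 4 * E ≤ dist (μs k₀ ω) μ0 ^ 2}).toReal :=
        ENNReal.toReal_mono (measure_ne_top _ _) (measure_mono hsub)
      have hmar' : 4 * E * (ℙ {ω | 4 * E ≤ dist (μs k₀ ω) μ0 ^ 2}).toReal ≤ E := hmar
      nlinarith [ENNReal.toReal_nonneg (a := ℙ (B k₀))]
  have hp : ∀ k, (ℙ (B k)).toReal ≤ 1/4 := by
    intro k
    have := (hident k).measure_mem_eq hAmeas
    rw [hBdef]; simp only []
    rw [this]
    exact hp0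
  -- indicator variables
  set φ : M → ℝ := fun x => if 2 * σ < dist x μ0 then 1 else 0 with hφdef
  have hφ : Measurable φ :=
    Measurable.ite hAmeas measurable_const measurable_const
  set X : Fin K → Ω → ℝ := fun k => φ ∘ μs k with hXdef
  have hXmeas : ∀ k, Measurable (X k) := fun k => hφ.comp (hmeas k)
  have hXindep : iIndepFun X ℙ :=
    hind.comp (fun _ => φ) (fun _ => hφ)
  set t : ℝ := Real.log 3 with ht
  have ht0 : 0 ≤ t := Real.log_nonneg (by norm_num)
  -- mgf bound
  have hmgf : ∀ k, mgf (X k) ℙ t ≤ 3/2 := by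
    intro k
    have hXeq : ∀ ω, Real.exp (t * X k ω) = (B k).indicator (fun _ => (2:ℝ)) ω + 1 := by
      intro ω
      by_cases hω : ω ∈ B k
      · have : X k ω = 1 := by
          simp only [hXdef, Function.comp_apply, hφdef]
          exact if_pos hω
        rw [this, Set.indicator_of_mem hω]
        rw [mul_one, ht, Real.exp_log (by norm_num)]; norm_num
      · have : X k ω = 0 := by
          simp only [hXdef, Function.comp_apply, hφdef]
          exact if_neg hω
        rw [this, Set.indicator_of_notMem hω]
        simp
    have : mgf (X k) ℙ t = ∫ ω, Real.exp (t * X k ω) ∂ℙ := rfl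
    rw [this]
    simp_rw [hXeq]
    rw [integral_add ((integrable_const (2:ℝ)).indicator (hBmeas k)) (integrable_const 1),
      integral_indicator_const _ (hBmeas k), integral_const, probReal_univ]
    have := hp k
    have h' : Measure.real ℙ (B k) ≤ 1/4 := this
    simp only [smul_eq_mul, ENNReal.toReal_one, one_smul]
    nlinarith [measureReal_nonneg (μ := ℙ) (s := B k)]
  -- integrability of exp(t * sum)
  have hsummeas : Measurable (∑ k ∈ Finset.univ, X k) := by
    have : (∑ k ∈ Finset.univ, X k) = fun ω => ∑ k ∈ Finset.univ, X k ω := by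
      funext ω; rw [Finset.sum_apply]
    rw [this]
    exact Finset.measurable_sum _ (fun k _ => hXmeas k)
  have hXle1 : ∀ k ω, X k ω ≤ 1 := by
    intro k ω
    simp only [hXdef, Function.comp_apply, hφdef]
    split <;> norm_num
  have hX0 : ∀ k ω, 0 ≤ X k ω := by
    intro k ω
    simp only [hXdef, Function.comp_apply, hφdef]
    split <;> norm_num
  have hYle : ∀ ω, (∑ k ∈ Finset.univ, X k) ω ≤ K := by
    intro ω
    rw [Finset.sum_apply]
    calc ∑ k ∈ Finset.univ, X k ω ≤ ∑ _k ∈ (Finset.univ : Finset (Fin K)), (1:ℝ) :=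
      Finset.sum_le_sum fun k _ => hXle1 k ω
    _ = K := by simp
  have hint2 : Integrable (fun ω => Real.exp (t * (∑ k ∈ Finset.univ, X k) ω)) ℙ := by
    refine Integrable.mono' (integrable_const (Real.exp (t * K))) ?_ ?_
    · exact ((hsummeas.const_mul t).exp).aestronglyMeasurable
    · refine Filter.Eventually.of_forall fun ω => ?_
      rw [Real.norm_eq_abs, abs_of_pos (Real.exp_pos _)]
      exact Real.exp_le_exp.mpr (mul_le_mul_of_nonneg_left (hYle ω) ht0)
  -- Chernoff
  have hcher := measure_ge_le_exp_mul_mgf (μ := ℙ) (X := ∑ k ∈ Finset.univ, X k)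
    ((K:ℝ)/2) ht0 hint2
  rw [hXindep.mgf_sum hXmeas] at hcher
  have hprod : ∏ k ∈ Finset.univ, mgf (X k) ℙ t ≤ ((3:ℝ)/2)^K := by
    calc ∏ k ∈ Finset.univ, mgf (X k) ℙ t
        ≤ ∏ _k ∈ (Finset.univ : Finset (Fin K)), ((3:ℝ)/2) :=
          Finset.prod_le_prod (fun k _ => mgf_nonneg) (fun k _ => hmgf k)
    _ = ((3:ℝ)/2)^K := by simp [div_pow]
  have hKreal : 8 * Real.log (1/δ) ≤ (K:ℝ) := by
    rw [hKδ]; exact Nat.le_ceil _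
  have hfinal : (ℙ {ω | (K:ℝ)/2 ≤ (∑ k ∈ Finset.univ, X k) ω}).toReal ≤ δ := by
    calc (ℙ {ω | (K:ℝ)/2 ≤ (∑ k ∈ Finset.univ, X k) ω}).toReal
        ≤ Real.exp (-t * ((K:ℝ)/2)) * ∏ k ∈ Finset.univ, mgf (X k) ℙ t := hcher
    _ ≤ Real.exp (-t * ((K:ℝ)/2)) * ((3:ℝ)/2)^K :=
        mul_le_mul_of_nonneg_left hprod (Real.exp_pos _).le
    _ ≤ δ := arith_bound δ hδ0 hδ1 K hKreal
  -- event inclusion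
  have hsub : {ω | 6 * σ < dist (μs (jstar ω) ω) μ0} ⊆
      {ω | (K:ℝ)/2 ≤ (∑ k ∈ Finset.univ, X k) ω} ∪
      {ω | ¬ ∀ j : Fin K, grosObj K (fun k => μs k ω) (μs (jstar ω) ω) ≤
        grosObj K (fun k => μs k ω) (μs j ω)} := by
    intro ω hω
    by_cases hm : ∀ j : Fin K, grosObj K (fun k => μs k ω) (μs (jstar ω) ω) ≤
        grosObj K (fun k => μs k ω) (μs j ω)
    swap
    · exact Or.inr hm
    left
    show (K:ℝ)/2 ≤ (∑ k ∈ Finset.univ, X k) ω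
    by_contra hc
    push_neg at hc
    have hsum : (∑ k ∈ Finset.univ, X k) ω =
        ((Finset.univ.filter (fun k => 2*σ < dist (μs k ω) μ0)).card : ℝ) := by
      rw [Finset.sum_apply]
      simp only [hXdef, Function.comp_apply, hφdef]
      rw [Finset.sum_boole]
    rw [hsum] at hc
    have hbad : 2 * (Finset.univ.filter (fun k => 2*σ < dist (μs k ω) μ0)).card < K := by
      have : ((Finset.univ.filter (fun k => 2*σ < dist (μs k ω) μ0)).card : ℝ) < (K:ℝ)/2 := hc
      have h2 : 2 * ((Finset.univ.filter (fun k => 2*σ < dist (μs k ω) μ0)).card : ℝ) < K := by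
        linarith
      exact_mod_cast h2
    have hGcard : K < 2 * (Finset.univ.filter (fun k => dist (μs k ω) μ0 ≤ 2*σ)).card := by
      have hsplit := Finset.card_filter_add_card_filter_not
        (s := (Finset.univ : Finset (Fin K))) (p := fun k => dist (μs k ω) μ0 ≤ 2*σ)
      have hnegeq : (Finset.univ.filter (fun k => ¬ dist (μs k ω) μ0 ≤ 2*σ)).card =
          (Finset.univ.filter (fun k => 2*σ < dist (μs k ω) μ0)).card := by
        congr 1
        apply Finset.filter_congr
        intro k _
        simp [not_le]
      rw [hnegeq] at hsplit
      simp only [Finset.card_univ, Fintype.card_fin] at hsplit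
      omega
    have hdet := det_lemma (fun k => μs k ω) μ0 (by positivity : (0:ℝ) ≤ 2*σ)
      (jstar ω) hm hGcard
    have : 6 * σ < dist (μs (jstar ω) ω) μ0 := hω
    nlinarith
  -- measure chain
  have hN : ℙ {ω | ¬ ∀ j : Fin K, grosObj K (fun k => μs k ω) (μs (jstar ω) ω) ≤
      grosObj K (fun k => μs k ω) (μs j ω)} = 0 := by
    exact hmin
  calc ℙ {ω | 6 * σ < dist (μs (jstar ω) ω) μ0}
      ≤ ℙ ({ω | (K:ℝ)/2 ≤ (∑ k ∈ Finset.univ, X k) ω} ∪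
        {ω | ¬ ∀ j : Fin K, grosObj K (fun k => μs k ω) (μs (jstar ω) ω) ≤
          grosObj K (fun k => μs k ω) (μs j ω)}) := measure_mono hsub
  _ ≤ ℙ {ω | (K:ℝ)/2 ≤ (∑ k ∈ Finset.univ, X k) ω} +
      ℙ {ω | ¬ ∀ j : Fin K, grosObj K (fun k => μs k ω) (μs (jstar ω) ω) ≤
        grosObj K (fun k => μs k ω) (μs j ω)} := measure_union_le _ _
  _ = ℙ {ω | (K:ℝ)/2 ≤ (∑ k ∈ Finset.univ, X k) ω} := by rw [hN, add_zero]
  _ ≤ ENNReal.ofReal δ := by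
      rw [← ENNReal.ofReal_toReal (measure_ne_top ℙ _)]
      exact ENNReal.ofReal_le_ofReal hfinal
end

section
/- Let (M, d) be a pseudometric space, K a positive integer, μ, η ∈ M, and μ₁,…,μ_K ∈ M. Let M̃ ⊆ M be nonempty with inf_{ν∈M̃} d(η, ν) = ε, and suppose μ₁,…,μ_K are independent random elements with P(d(μ_k, η) > t) ≤ 1/4 for all k, where K = ⌈8 log(1/δ)⌉ for some δ ∈ (0,1). Let μ̃ be a random element of M̃ that almost surely minimizes ν ↦ min_{I:|I|>K/2} max_{j∈I} d(μ_j, ν) over M̃. Then P(d(μ̃, η) > 2t + ε) ≤ δ. -/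
open Finset MeasureTheory ProbabilityTheory

lemma grosObj_le {M : Type*} [PseudoMetricSpace M] {K : ℕ}
    {μs : Fin K → M} {ν : M} (I : Finset (Fin K)) (hI : K < 2 * I.card)
    {c : ℝ} (hc : 0 ≤ c) (h : ∀ j ∈ I, dist (μs j) ν ≤ c) :
    grosObj K μs ν ≤ c := by
  have hbdd : BddBelow (Set.range fun I : {I : Finset (Fin K) // K < 2 * I.card} =>
      ⨆ j ∈ I.1, dist (μs j) ν) := by
    refine ⟨0, ?_⟩
    rintro x ⟨J, rfl⟩
    exact Real.iSup_nonneg fun j => Real.iSup_nonneg fun _ => dist_nonneg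
  refine ciInf_le_of_le hbdd ⟨I, hI⟩ ?_
  refine Real.iSup_le (fun j => Real.iSup_le (fun hj => h j hj) hc) hc

lemma le_grosObj {M : Type*} [PseudoMetricSpace M] {K : ℕ} (hK : 0 < K)
    {μs : Fin K → M} {ν : M} {c : ℝ}
    (h : ∀ I : Finset (Fin K), K < 2 * I.card → ∃ j ∈ I, c ≤ dist (μs j) ν) :
    c ≤ grosObj K μs ν := by
  have hne : Nonempty {I : Finset (Fin K) // K < 2 * I.card} :=
    ⟨⟨Finset.univ, by simp; omega⟩⟩
  refine le_ciInf fun I => ?_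
  obtain ⟨j, hjI, hj⟩ := h I.1 I.2
  refine hj.trans ?_
  have heq : (⨆ _ : j ∈ I.1, dist (μs j) ν) = dist (μs j) ν := ciSup_pos hjI
  rw [← heq]
  exact le_ciSup (f := fun i => ⨆ _ : i ∈ I.1, dist (μs i) ν) (Set.Finite.bddAbove (Set.finite_range _)) j

lemma gros_det {M : Type*} [PseudoMetricSpace M] {K : ℕ} (hK : 0 < K)
    (μs : Fin K → M) (η : M) {Mt : Set M} (hne : Mt.Nonempty)
    {ε t : ℝ} (hε : Metric.infDist η Mt = ε) (ht : 0 ≤ t)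
    {w : M} (hmin : ∀ ν ∈ Mt, grosObj K μs w ≤ grosObj K μs ν)
    (hgood : K < 2 * (Finset.univ.filter (fun k => dist (μs k) η ≤ t)).card) :
    dist w η ≤ 2 * t + ε := by
  have hε0 : 0 ≤ ε := hε ▸ Metric.infDist_nonneg
  refine le_of_forall_pos_le_add fun θ hθ => ?_
  obtain ⟨ν, hνMt, hνd⟩ : ∃ ν ∈ Mt, dist η ν < ε + θ := by
    rw [← Metric.infDist_lt_iff hne, hε]; linarith
  set G := Finset.univ.filter (fun k => dist (μs k) η ≤ t) with hG
  -- upper bound on grosObj at ν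
  have h1 : grosObj K μs ν ≤ t + (ε + θ) := by
    refine grosObj_le G hgood (by linarith) fun j hj => ?_
    have hjt : dist (μs j) η ≤ t := (Finset.mem_filter.mp hj).2
    calc dist (μs j) ν ≤ dist (μs j) η + dist η ν := dist_triangle _ _ _
      _ ≤ t + (ε + θ) := by linarith
  -- lower bound on grosObj at w
  have h2 : dist w η - t ≤ grosObj K μs w := by
    refine le_grosObj hK fun I hI => ?_
    have hinter : (G ∩ I).Nonempty := by
      rw [← Finset.card_pos]
      by_contra h
      push_neg at h
      interval_cases h' : (G ∩ I).card
      · have hdisj : Disjoint G I := Finset.disjoint_iff_inter_eq_empty.mpr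
          (Finset.card_eq_zero.mp h')
        have := Finset.card_le_univ (G ∪ I)
        rw [Finset.card_union_of_disjoint hdisj] at this
        simp only [Finset.card_univ, Fintype.card_fin] at this
        omega
    obtain ⟨j, hj⟩ := hinter
    rw [Finset.mem_inter] at hj
    refine ⟨j, hj.2, ?_⟩
    have hjt : dist (μs j) η ≤ t := (Finset.mem_filter.mp hj.1).2
    have := dist_triangle w (μs j) η
    rw [dist_comm w (μs j)] at this
    linarith
  have := (h2.trans (hmin ν hνMt)).trans h1
  linarith

/-- Mis-specified sub-Gaussian aggregation: if the GROS minimization is carried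
out over a subset `M̃` at distance `ε` from `η`, with `K = ⌈8 log(1/δ)⌉`
independent estimators each satisfying `P(d(μ_k, η) > t) ≤ 1/4`, then
`P(d(μ̃, η) > 2t + ε) ≤ δ`. -/
theorem stmt16 {Ω M : Type*} [MeasureSpace Ω] [IsProbabilityMeasure (ℙ : Measure Ω)]
    [MetricSpace M] [MeasurableSpace M] [BorelSpace M]
    (δ : ℝ) (hδ : δ ∈ Set.Ioo (0 : ℝ) 1) (hδ' : δ ≤ Real.exp (-1))
    (K : ℕ) (hKδ : K = ⌈8 * Real.log (1 / δ)⌉₊) (hKpos : 0 < K)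
    (η : M) (Mt : Set M) (hne : Mt.Nonempty)
    (ε : ℝ) (hε : Metric.infDist η Mt = ε)
    (μs : Fin K → Ω → M) (hmeas : ∀ k, Measurable (μs k))
    (hind : iIndepFun μs ℙ)
    (t : ℝ) (ht : 0 < t)
    (hfar : ∀ k, ℙ {ω | t < dist (μs k ω) η} ≤ ENNReal.ofReal (1 / 4))
    (μt : Ω → M) (hmem : ∀ ω, μt ω ∈ Mt)
    (hmin : ∀ᵐ ω ∂ℙ, ∀ ν ∈ Mt,
      grosObj K (fun k => μs k ω) (μt ω) ≤ grosObj K (fun k => μs k ω) ν) :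
    ℙ {ω | 2 * t + ε < dist (μt ω) η} ≤ ENNReal.ofReal δ := by
  classical
  obtain ⟨hδ0, hδ1⟩ := hδ
  set A : Set M := {x | t < dist x η} with hA
  have hAmeas : MeasurableSet A :=
    (isOpen_lt continuous_const (continuous_id.dist continuous_const)).measurableSet
  set f : M → ℝ := A.indicator 1 with hf
  have hfmeas : Measurable f := measurable_one.indicator hAmeas
  set X : Fin K → Ω → ℝ := fun k => f ∘ μs k with hX
  have hXmeas : ∀ k, Measurable (X k) := fun k => hfmeas.comp (hmeas k)
  have hXind : iIndepFun X ℙ :=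
    hind.comp (fun _ => f) (fun _ => hfmeas)
  set S : Ω → ℝ := fun ω => ∑ k, X k ω with hS
  have hXval : ∀ k ω, X k ω = if t < dist (μs k ω) η then 1 else 0 := by
    intro k ω
    simp [hX, hf, Set.indicator_apply, hA, Set.mem_setOf_eq]
  have hSval : ∀ ω, S ω =
      ((Finset.univ.filter (fun k => t < dist (μs k ω) η)).card : ℝ) := by
    intro ω
    simp only [hS, hXval]
    rw [Finset.sum_boole]
  -- event inclusion
  have hsub : {ω | 2 * t + ε < dist (μt ω) η} ≤ᵐ[ℙ] {ω | (K : ℝ) / 2 ≤ S ω} := by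
    filter_upwards [hmin] with ω hω hT
    have hT' : 2 * t + ε < dist (μt ω) η := hT
    show (K : ℝ) / 2 ≤ S ω
    by_contra h
    push_neg at h
    have hgb : (Finset.univ.filter (fun k => dist (μs k ω) η ≤ t)).card
        + (Finset.univ.filter (fun k => t < dist (μs k ω) η)).card = K := by
      have := Finset.card_filter_add_card_filter_not
        (s := (Finset.univ : Finset (Fin K))) (p := fun k => dist (μs k ω) η ≤ t)
      simpa [not_le, Finset.card_univ] using this
    have hb : 2 * (Finset.univ.filter (fun k => t < dist (μs k ω) η)).card < K := by
      rw [hSval ω] at h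
      have h2 : (2 * (Finset.univ.filter (fun k => t < dist (μs k ω) η)).card : ℝ)
          < (K : ℝ) := by push_cast; linarith
      exact_mod_cast h2
    have hgood : K < 2 * (Finset.univ.filter
        (fun k => dist (μs k ω) η ≤ t)).card := by omega
    exact absurd (gros_det hKpos (fun k => μs k ω) η hne hε ht.le hω hgood)
      (not_le.mpr hT')
  refine le_trans (measure_mono_ae hsub) ?_
  -- Chernoff bound
  set s3 : ℝ := Real.log 3 with hs3def
  have hs3 : 0 ≤ s3 := Real.log_nonneg (by norm_num)
  have hexp3 : Real.exp s3 = 3 := Real.exp_log (by norm_num)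
  have hSmeas : Measurable S := Finset.measurable_sum _ (fun k _ => hXmeas k)
  have hSbound : ∀ ω, S ω ≤ K := by
    intro ω
    rw [hSval]
    exact_mod_cast Nat.cast_le.mpr ((Finset.card_filter_le _ _).trans
      (by simp : (Finset.univ : Finset (Fin K)).card ≤ K))
  have h_int : Integrable (fun ω => Real.exp (s3 * S ω)) ℙ := by
    refine Integrable.mono' (integrable_const (Real.exp (s3 * K)))
      ((hSmeas.const_mul s3).exp.aestronglyMeasurable) ?_
    filter_upwards with ω
    rw [Real.norm_eq_abs, abs_of_pos (Real.exp_pos _)]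
    exact Real.exp_le_exp.mpr (mul_le_mul_of_nonneg_left (hSbound ω) hs3)
  have hcher := measure_ge_le_exp_mul_mgf (X := S) (μ := ℙ) ((K : ℝ) / 2) hs3 h_int
  have hmgf : ∀ k, mgf (X k) ℙ s3 ≤ 3 / 2 := by
    intro k
    have hBk : MeasurableSet {ω | t < dist (μs k ω) η} := (hmeas k) hAmeas
    have heq : (fun ω => Real.exp (s3 * X k ω))
        = fun ω => Set.indicator {ω | t < dist (μs k ω) η} (fun _ => (2 : ℝ)) ω + 1 := by
      funext ω
      rw [hXval]
      by_cases hc : t < dist (μs k ω) η <;>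
        simp [hc, hexp3, Set.indicator_apply, Set.mem_setOf_eq] <;> norm_num
    have h4 : (ℙ {ω | t < dist (μs k ω) η}).toReal ≤ 1 / 4 := by
      have := ENNReal.toReal_mono (by simp) (hfar k)
      simpa using this
    unfold mgf
    rw [heq, integral_add ((integrable_const (2:ℝ)).indicator hBk) (integrable_const 1),
      integral_indicator_const _ hBk, integral_const]
    simp only [measureReal_def, measure_univ, ENNReal.toReal_one, smul_eq_mul, one_mul, mul_one]
    linarith
  have hmgfS : mgf S ℙ s3 ≤ (3 / 2 : ℝ) ^ K := by
    have hSeq : S = ∑ k, X k := by funext ω; simp [hS]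
    rw [hSeq, hXind.mgf_sum hXmeas]
    calc ∏ k, mgf (X k) ℙ s3 ≤ ∏ _k : Fin K, (3 / 2 : ℝ) :=
        Finset.prod_le_prod (fun k _ => mgf_nonneg) (fun k _ => hmgf k)
      _ = (3 / 2 : ℝ) ^ K := by simp [div_pow]
  have hfinal : (ℙ {ω | (K : ℝ) / 2 ≤ S ω}).toReal ≤ δ := by
    refine hcher.trans ?_
    refine le_trans (mul_le_mul_of_nonneg_left hmgfS (Real.exp_pos _).le) ?_
    have h32 : ((3 : ℝ) / 2) ^ K = Real.exp (K * Real.log (3 / 2)) := by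
      rw [Real.exp_nat_mul, Real.exp_log (by norm_num)]
    rw [h32, ← Real.exp_add]
    rw [← Real.exp_log hδ0]
    apply Real.exp_le_exp.mpr
    have hL : 0 ≤ Real.log (1 / δ) := Real.log_nonneg (by
      rw [le_div_iff₀ hδ0]; linarith)
    have hK8 : 8 * Real.log (1 / δ) ≤ (K : ℝ) := hKδ ▸ Nat.le_ceil _
    have hlog32 : Real.log (3 / 2) = Real.log 3 - Real.log 2 :=
      Real.log_div (by norm_num) (by norm_num)
    have hlogδ : Real.log (1 / δ) = - Real.log δ := by rw [one_div, Real.log_inv]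
    have h43 : (1 : ℝ) / 4 ≤ 2 * Real.log 2 - Real.log 3 := by
      have h1 : Real.log (4 / 3) = 2 * Real.log 2 - Real.log 3 := by
        rw [Real.log_div (by norm_num) (by norm_num),
          show (4 : ℝ) = 2 ^ 2 by norm_num, Real.log_pow]
        push_cast; ring
      rw [← h1, Real.le_log_iff_exp_le (by norm_num)]
      have h2 : Real.exp (1 / 4) ^ (4 : ℕ) ≤ (4 / 3 : ℝ) ^ (4 : ℕ) := by
        rw [← Real.exp_nat_mul]
        have := Real.exp_one_lt_d9
        norm_num
        linarith
      exact le_of_pow_le_pow_left₀ (by norm_num) (by norm_num) h2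
    have h18 : (1 : ℝ) / 8 ≤ Real.log 2 - Real.log 3 / 2 := by linarith
    have hKnn : (0 : ℝ) ≤ (K : ℝ) := Nat.cast_nonneg K
    have := mul_le_mul_of_nonneg_left h18 hKnn
    rw [hs3def]
    nlinarith
  calc ℙ {ω | (K : ℝ) / 2 ≤ S ω}
      = ENNReal.ofReal ((ℙ {ω | (K : ℝ) / 2 ≤ S ω}).toReal) :=
        (ENNReal.ofReal_toReal (measure_ne_top _ _)).symm
    _ ≤ ENNReal.ofReal δ := ENNReal.ofReal_le_ofReal hfinal
end
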